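/- Vertex-deletion rule for σ_z measurements on graph states: let G be a finite simple graph on V, a ∈ V, N(a) the neighborhood of a, and G−a the induced subgraph on V∖{a}. Then for every k ∈ Bool and every y : V∖{a} → Bool, |G⟩(y extended by the value k at a) = 2^{−1/2} · (−1)^{k · |{b ∈ N(a) : y b = true}|} · |G−a⟩(y). In other words, projecting qubit a of |G⟩ onto the computational basis state |k⟩ yields (after normalization) the state (∏_{b ∈ N(a)} σ_z^{(b)})^k |G−a⟩, i.e., a σ_z measurement deletes the measured vertex up to σ_z corrections on its neighbors. -/
import Mathlib


open scoped BigOperators Classical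

noncomputable section

/-- The number `q_G(x)` of edges `{a,b}` of `G` with `x a = x b = true`. -/
def qCount {V : Type} [Fintype V] [DecidableEq V] (G : SimpleGraph V)
    (x : V → Bool) : ℕ :=
  (Finset.univ.filter fun e : Sym2 V => e ∈ G.edgeSet ∧ ∀ v ∈ e, x v = true).card

/-- The graph state of a finite simple graph `G` on the vertex set `V`:
`|G⟩(x) = 2^{−n/2} · (−1)^{q_G(x)}` where `n = |V|`. -/
def graphState {V : Type} [Fintype V] [DecidableEq V] (G : SimpleGraph V) :
    (V → Bool) → ℂ :=
  fun x => (1 / (Real.sqrt (2 ^ Fintype.card V) : ℂ)) * (-1) ^ qCount G x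

/-- The Pauli operator `σ_z` at qubit `a`: `(σ_z^{(a)} ψ)(x) = (−1)^{x a} ψ(x)`. -/
def sigmaZ {V : Type} (a : V) (ψ : (V → Bool) → ℂ) : (V → Bool) → ℂ :=
  fun x => (if x a then (-1 : ℂ) else 1) * ψ x

/-- The Pauli operator `σ_x` at qubit `a`:
`(σ_x^{(a)} ψ)(x) = ψ(x with the coordinate at a flipped)`. -/
def sigmaX {V : Type} [DecidableEq V] (a : V) (ψ : (V → Bool) → ℂ) :
    (V → Bool) → ℂ :=
  fun x => ψ (Function.update x a (!x a))

/-- The product `∏_{b ∈ S} σ_z^{(b)}` of Pauli `σ_z` operators over a finite set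
of qubits. -/
def sigmaZprod {V : Type} (S : Finset V) (ψ : (V → Bool) → ℂ) :
    (V → Bool) → ℂ :=
  fun x => (∏ b ∈ S, if x b then (-1 : ℂ) else 1) * ψ x

/-- The correlation operator `K_a := σ_x^{(a)} ∘ ∏_{b ∈ N(a)} σ_z^{(b)}` of the
graph `G` at the vertex `a`, where `N(a)` is the neighborhood of `a` in `G`. -/
def corrOp {V : Type} [Fintype V] [DecidableEq V] (G : SimpleGraph V) (a : V)
    (ψ : (V → Bool) → ℂ) : (V → Bool) → ℂ :=
  sigmaX a (sigmaZprod (Finset.univ.filter fun b => G.Adj a b) ψ)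

/-- Extension of an assignment `y : V∖{a} → Bool` by the value `k` at `a`. -/
def extendAt {V : Type} [DecidableEq V] (a : V) (k : Bool)
    (y : {v : V // v ≠ a} → Bool) : V → Bool :=
  fun v => if h : v = a then k else y ⟨v, h⟩

/-- Vertex-deletion rule for `σ_z` measurements on graph states: for every
`k : Bool` and every `y : V∖{a} → Bool`,
`|G⟩(y extended by k at a) = 2^{−1/2} · (−1)^{k·|{b ∈ N(a) : y b = true}|} · |G−a⟩(y)`,
where `G−a` is the induced subgraph on `V∖{a}`.  Thus projecting qubit `a` onto
`|k⟩` yields (after normalization) `(∏_{b ∈ N(a)} σ_z^{(b)})^k |G−a⟩`: a `σ_z`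
measurement deletes the measured vertex up to `σ_z` corrections on its
neighbors. -/
theorem graphState_sigmaZ_measurement {V : Type} [Fintype V] [DecidableEq V]
    (G : SimpleGraph V) (a : V) (k : Bool) (y : {v : V // v ≠ a} → Bool) :
    graphState G (extendAt a k y)
      = (1 / (Real.sqrt 2 : ℂ))
        * (-1) ^ (if k
            then (Finset.univ.filter
              fun b : {v : V // v ≠ a} => G.Adj a b.val ∧ y b = true).card
            else 0)
        * graphState (G.comap (Subtype.val : {v : V // v ≠ a} → V)) y := by
  classical
  set x := extendAt a k y with hxdef
  have hx : ∀ v : {v : V // v ≠ a}, x v.val = y v := by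
    intro v; simp [hxdef, extendAt, v.2]
  have hxa : x a = k := by simp [hxdef, extendAt]
  set S : Finset (Sym2 V) :=
    Finset.univ.filter fun e : Sym2 V => e ∈ G.edgeSet ∧ ∀ v ∈ e, x v = true with hS
  have hsplit : (S.filter fun e => a ∈ e).card + (S.filter fun e => ¬ a ∈ e).card
      = qCount G x := by
    rw [qCount, ← hS]
    exact Finset.card_filter_add_card_filter_not _
  have hmemS : ∀ u v : V, s(u, v) ∈ S ↔ (G.Adj u v ∧ (x u = true ∧ x v = true)) := by
    intro u v
    rw [hS]
    simp [Sym2.ball, SimpleGraph.mem_edgeSet]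
  have hS2 : (S.filter fun e => ¬ a ∈ e).card
      = qCount (G.comap (Subtype.val : {v : V // v ≠ a} → V)) y := by
    rw [qCount]
    symm
    apply Finset.card_bij (fun e _ => Sym2.map Subtype.val e)
    · intro e he
      induction e with
      | _ u v =>
        simp only [Finset.mem_filter, Finset.mem_univ, true_and,
          SimpleGraph.mem_edgeSet, SimpleGraph.comap_adj, Sym2.ball] at he
        rw [Sym2.map_pair_eq, Finset.mem_filter]
        refine ⟨(hmemS _ _).mpr ⟨he.1, by rw [hx]; exact he.2.1, by rw [hx]; exact he.2.2⟩, ?_⟩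
        rw [Sym2.mem_iff]
        rintro (h | h)
        · exact u.2 h.symm
        · exact v.2 h.symm
    · intro e1 _ e2 _ h
      exact Sym2.map.injective Subtype.val_injective h
    · intro e he
      induction e with
      | _ u v =>
        rw [Finset.mem_filter, hmemS] at he
        obtain ⟨⟨hadj, hu1, hv1⟩, hnot⟩ := he
        rw [Sym2.mem_iff, not_or] at hnot
        obtain ⟨hu, hv⟩ := hnot
        refine ⟨s(⟨u, fun h => hu h.symm⟩, ⟨v, fun h => hv h.symm⟩), ?_, by
          rw [Sym2.map_pair_eq]⟩
        simp only [Finset.mem_filter, Finset.mem_univ, true_and,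
          SimpleGraph.mem_edgeSet, SimpleGraph.comap_adj, Sym2.ball]
        exact ⟨hadj, (hx _).symm.trans hu1, (hx _).symm.trans hv1⟩
  have hS1 : (S.filter fun e => a ∈ e).card
      = (if k then (Finset.univ.filter
          fun b : {v : V // v ≠ a} => G.Adj a b.val ∧ y b = true).card else 0) := by
    cases k with
    | false =>
      rw [if_neg (by simp), Finset.card_eq_zero]
      apply Finset.filter_eq_empty_iff.mpr
      intro e he hae
      rw [hS, Finset.mem_filter] at he
      have := he.2.2 a hae
      rw [hxa] at this; exact absurd this (by simp)
    | true =>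
      rw [if_pos rfl]
      symm
      apply Finset.card_bij (fun b _ => s(a, b.val))
      · intro b hb
        simp only [Finset.mem_filter, Finset.mem_univ, true_and] at hb
        rw [Finset.mem_filter, hmemS]
        exact ⟨⟨hb.1, hxa, by rw [hx]; exact hb.2⟩, Sym2.mem_mk_left a _⟩
      · intro b1 _ b2 _ h
        rw [Sym2.eq_iff] at h
        rcases h with ⟨-, h⟩ | ⟨-, h⟩
        · exact Subtype.ext h
        · exact absurd h b1.2
      · intro e he
        rw [Finset.mem_filter] at he
        obtain ⟨heS, hae⟩ := he
        induction e with
        | _ u v =>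
          rw [hmemS] at heS
          obtain ⟨hadj, hu1, hv1⟩ := heS
          rw [Sym2.mem_iff] at hae
          rcases hae with rfl | rfl
          · refine ⟨⟨v, fun h => (G.ne_of_adj hadj) h.symm⟩, ?_, rfl⟩
            simp only [Finset.mem_filter, Finset.mem_univ, true_and]
            exact ⟨hadj, (hx _).symm.trans hv1⟩
          · refine ⟨⟨u, fun h => (G.ne_of_adj hadj) h⟩, ?_, Sym2.eq_swap⟩
            simp only [Finset.mem_filter, Finset.mem_univ, true_and]
            exact ⟨hadj.symm, (hx _).symm.trans hu1⟩
  have hq : qCount G x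
      = (if k then (Finset.univ.filter
          fun b : {v : V // v ≠ a} => G.Adj a b.val ∧ y b = true).card else 0)
        + qCount (G.comap (Subtype.val : {v : V // v ≠ a} → V)) y := by
    rw [← hsplit, hS1, hS2]
  have hcard : Fintype.card V = Fintype.card {v : V // v ≠ a} + 1 := by
    have h1 : Fintype.card {v : V // ¬ v = a} = Fintype.card V - 1 := by
      rw [Fintype.card_subtype_compl, Fintype.card_subtype_eq]
    have hpos : 0 < Fintype.card V := Fintype.card_pos_iff.mpr ⟨a⟩
    have h2 : Fintype.card {v : V // v ≠ a} = Fintype.card {v : V // ¬ v = a} := rfl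
    omega
  have hsqrt : (Real.sqrt (2 ^ Fintype.card V) : ℂ)
      = (Real.sqrt 2 : ℂ) * (Real.sqrt (2 ^ Fintype.card {v : V // v ≠ a}) : ℂ) := by
    rw [hcard]
    rw [← Complex.ofReal_mul, ← Real.sqrt_mul (by norm_num)]
    norm_num [pow_succ, mul_comm]
  rw [graphState, graphState, hq, pow_add, hsqrt]
  have h2 : (Real.sqrt 2 : ℂ) ≠ 0 :=
    Complex.ofReal_ne_zero.mpr (by positivity)
  have h2' : (Real.sqrt (2 ^ Fintype.card {v : V // v ≠ a}) : ℂ) ≠ 0 :=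
    Complex.ofReal_ne_zero.mpr (by positivity)
  field_simp
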